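/- Let p be a prime and V a finite-dimensional vector space over ZMod p. Let P be a subgroup of the group of linear automorphisms of V such that every element of P has order a power of p and every element of P is a p-th power of some element of P (P is p-divisible). Then P is the trivial subgroup. -/

import Mathlib

open Module

lemma aux_nilpotent_pow {p : ℕ} [Fact p.Prime] {V : Type*} [AddCommGroup V]
    [Module (ZMod p) V] [FiniteDimensional (ZMod p) V]
    (f : Module.End (ZMod p) V) (hf : IsNilpotent f) :
    f ^ finrank (ZMod p) V = 0 := by
  have h := hf.charpoly_eq_X_pow_finrank
  have h2 := LinearMap.aeval_self_charpoly f
  rw [h] at h2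
  simpa using h2

lemma aux_div_iter {G : Type*} [Group G] (P : Subgroup G) (p : ℕ)
    (hdiv : ∀ y ∈ P, ∃ x ∈ P, x ^ p = y) (k : ℕ) :
    ∀ y ∈ P, ∃ x ∈ P, x ^ (p ^ k) = y := by
  induction k with
  | zero => exact fun y hy => ⟨y, hy, by simp⟩
  | succ k ih =>
    intro y hy
    obtain ⟨z, hz, hzy⟩ := hdiv y hy
    obtain ⟨x, hx, hxz⟩ := ih z hz
    exact ⟨x, hx, by rw [pow_succ, pow_mul, hxz, hzy]⟩

/-- If `p` is prime, `V` is a finite-dimensional vector space over `ZMod p`, and `P` is a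
subgroup of the group of linear automorphisms of `V` such that every element of `P` has
`p`-power order and every element of `P` is a `p`-th power of an element of `P`, then `P`
is trivial. -/
theorem stmt4 (p : ℕ) [Fact p.Prime] (V : Type*) [AddCommGroup V] [Module (ZMod p) V]
    [FiniteDimensional (ZMod p) V] (P : Subgroup (V ≃ₗ[ZMod p] V))
    (horder : ∀ x ∈ P, ∃ m : ℕ, x ^ (p ^ m) = 1)
    (hdiv : ∀ y ∈ P, ∃ x ∈ P, x ^ p = y) :
    P = ⊥ := by
  have hp : p.Prime := Fact.out
  rcases subsingleton_or_nontrivial V with hV | hV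
  · ext x
    simp only [Subgroup.mem_bot]
    constructor
    · intro _
      ext v
      exact Subsingleton.elim _ _
    · rintro rfl; exact P.one_mem
  haveI : CharP (Module.End (ZMod p) V) p :=
    charP_of_injective_algebraMap (algebraMap (ZMod p) (Module.End (ZMod p) V)).injective p
  set n := finrank (ZMod p) V with hn
  set k := n with hk
  have hnk : n ≤ p ^ k := le_of_lt (Nat.lt_pow_self (n := n) hp.one_lt)
  -- every p-power order element x satisfies x ^ p ^ k = 1
  have key : ∀ x ∈ P, x ^ (p ^ k) = 1 := by
    intro x hx
    obtain ⟨m, hm⟩ := horder x hx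
    set φ := LinearEquiv.automorphismGroup.toLinearMapMonoidHom (R := ZMod p) (M := V)
    have hφinj : Function.Injective φ := fun a b h => by
      exact LinearEquiv.toLinearMap_injective h
    have hfm : (φ x) ^ (p ^ m) = 1 := by rw [← map_pow, hm, map_one]
    have hnil : IsNilpotent (φ x - 1) := by
      refine ⟨p ^ m, ?_⟩
      rw [sub_pow_char_pow_of_commute p _ (Commute.one_right (φ x)), hfm, one_pow, sub_self]
    have hzero : (φ x - 1) ^ n = 0 := aux_nilpotent_pow _ hnil
    have hbig : (φ x - 1) ^ (p ^ k) = 0 := by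
      calc (φ x - 1) ^ (p ^ k) = (φ x - 1) ^ n * (φ x - 1) ^ (p ^ k - n) := by
            rw [← pow_add, Nat.add_sub_cancel' hnk]
        _ = 0 := by rw [hzero, zero_mul]
    have : (φ x) ^ (p ^ k) - 1 = 0 := by
      have h := sub_pow_char_pow_of_commute p k (Commute.one_right (φ x))
      rw [one_pow] at h
      rw [← h]
      exact hbig
    have hx1 : (φ x) ^ (p ^ k) = 1 := by
      have := sub_eq_zero.mp this
      simpa using this
    apply hφinj
    rw [map_pow, hx1, map_one]
  ext y
  simp only [Subgroup.mem_bot]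
  constructor
  · intro hy
    obtain ⟨x, hxP, hxy⟩ := aux_div_iter P p hdiv k y hy
    rw [← hxy, key x hxP]
  · rintro rfl; exact P.one_mem
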